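/- Let p be an odd prime, k ≥ 1 an integer, and 0 ≤ j ≤ 2k. Then the function τ ↦ (pτ+1)^{−2k}·φ(τ/(pτ+1))^{4k−2j}·φ(pτ/(pτ+1))^{2j} tends to (−1)^k·χ₋₄(p)^{j}/2^{2k} as Im τ → ∞. -/

import Mathlib

open Complex UpperHalfPlane Filter Matrix CongruenceSubgroup
open scoped Real MatrixGroups Manifold

open Topology

noncomputable section

/-- The primitive Dirichlet character mod 4: `1` on `1 mod 4`, `-1` on `3 mod 4`, `0` on evens. -/
def chi4 (n : ℤ) : ℤ := if n % 4 = 1 then 1 else if n % 4 = 3 then -1 else 0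

/-- Ramanujan's theta function `φ(z) = Σ_{n ∈ ℤ} exp(2πi n² z)` (convergent on `ℍ`). -/
def phi (z : ℂ) : ℂ := ∑' n : ℤ, Complex.exp (2 * (π : ℂ) * Complex.I * (n : ℂ) ^ 2 * z)


lemma phiaux_norm_term_real (x : ℝ) (n : ℤ) (τ : ℂ) :
    ‖jacobiTheta₂_term n (x : ℂ) τ‖ = Real.exp (-π * n ^ 2 * τ.im) := by
  rw [jacobiTheta₂_term, Complex.norm_exp]
  congr 1
  have : 2 * ↑π * Complex.I * ↑n * ↑x + ↑π * Complex.I * ↑n ^ 2 * τ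
      = ((2 * π * n * x : ℝ) : ℂ) * Complex.I + ((π * n ^ 2 : ℝ) : ℂ) * (τ * Complex.I) := by
    push_cast; ring
  rw [this, add_re, re_ofReal_mul, re_ofReal_mul]
  simp [Complex.I_re, Complex.mul_I_re]

lemma phiaux_tendsto_theta2_one (x : ℝ) {α : Type*} {l : Filter α} {f : α → ℂ}
    (hf : Tendsto (fun a => (f a).im) l atTop) :
    Tendsto (fun a => jacobiTheta₂ (x : ℂ) (f a)) l (𝓝 1) := by
  have key : Tendsto (fun a => ∑' n : ℤ, jacobiTheta₂_term n (x : ℂ) (f a)) l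
      (𝓝 (∑' n : ℤ, if n = 0 then (1 : ℂ) else 0)) := by
    apply tendsto_tsum_of_dominated_convergence (bound := fun n : ℤ => Real.exp (-π * n ^ 2))
    · have h1 : Summable fun n : ℤ => jacobiTheta₂_term n (x : ℂ) Complex.I :=
        (summable_jacobiTheta₂_term_iff _ _).mpr (by simp)
      have h2 := summable_norm_iff.mpr h1
      simpa only [phiaux_norm_term_real, Complex.I_im, mul_one] using h2
    · intro n
      rcases eq_or_ne n 0 with rfl | hn
      · simpa [jacobiTheta₂_term] using (tendsto_const_nhds : Tendsto (fun _ : α => (1:ℂ)) l _)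
      · simp only [if_neg hn]
        rw [tendsto_zero_iff_norm_tendsto_zero]
        simp only [phiaux_norm_term_real]
        apply Real.tendsto_exp_atBot.comp
        have hc : (0 : ℝ) < π * (n : ℝ) ^ 2 := by
          have : (n : ℝ) ≠ 0 := Int.cast_ne_zero.mpr hn
          positivity
        have h3 : Tendsto (fun a => π * (n:ℝ) ^ 2 * (f a).im) l atTop :=
          Tendsto.const_mul_atTop hc hf
        exact Tendsto.congr (fun a => by simp [Function.comp])
          (tendsto_neg_atTop_atBot.comp h3)
    · filter_upwards [hf.eventually_ge_atTop 1] with a ha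
      intro n
      rw [phiaux_norm_term_real]
      apply Real.exp_le_exp.mpr
      have h1 : (0:ℝ) ≤ π * n ^ 2 := by positivity
      nlinarith
  rw [tsum_ite_eq] at key
  exact key
lemma phi_eq (z : ℂ) : phi z = jacobiTheta₂ 0 (2 * z) := by
  rw [phi, jacobiTheta₂]
  refine tsum_congr fun n => ?_
  rw [jacobiTheta₂_term]
  ring_nf

lemma phi_w2 {u : ℂ} (hu : 0 < u.im) :
    phi (1 - 1 / u) = 1 / (2 * Complex.I / u) ^ (1 / 2 : ℂ) * jacobiTheta₂ 0 (u / 2) := by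
  have hu0 : u ≠ 0 := fun h => by simp [h] at hu
  rw [phi_eq]
  have h1 : 2 * (1 - 1 / u) = (-2 / u) + 2 := by field_simp; ring
  rw [h1, jacobiTheta₂_add_right, jacobiTheta₂_functional_equation]
  have e1 : -Complex.I * (-2 / u) = 2 * Complex.I / u := by ring
  have e2 : -1 / (-2 / u) = u / 2 := by field_simp
  have e3 : (0 : ℂ) / (-2 / u) = 0 := zero_div _
  rw [e1, e2, e3]
  simp
lemma phi_w1 (p : ℕ) [NeZero p] {u : ℂ} (hu : 0 < u.im) :
    phi ((u - 1) / ((p : ℂ) * u)) = 1 / (2 * Complex.I * p / u) ^ (1 / 2 : ℂ) *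
      ∑ r : Fin p, cexp (2 * π * Complex.I * (r : ℂ) ^ 2 / p) *
        jacobiTheta₂ ((r : ℂ) / p) (u / (2 * p)) := by
  have hu0 : u ≠ 0 := fun h => by simp [h] at hu
  have hp0 : (p : ℂ) ≠ 0 := Nat.cast_ne_zero.mpr (NeZero.ne p)
  have hpR : (0 : ℝ) < (p : ℝ) := by
    exact_mod_cast Nat.pos_of_ne_zero (NeZero.ne p)
  set w := (u - 1) / ((p : ℂ) * u) with hw_def
  have hw : w = (((p : ℝ)⁻¹ : ℝ) : ℂ) + (((p : ℝ)⁻¹ : ℝ) : ℂ) * (-u⁻¹) := by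
    rw [hw_def]
    push_cast
    field_simp
    ring
  have him : 0 < w.im := by
    rw [hw, add_im, ofReal_im, zero_add, im_ofReal_mul, neg_im, inv_im]
    have : 0 < Complex.normSq u := normSq_pos.mpr hu0
    have h2 : -(-u.im / Complex.normSq u) = u.im / Complex.normSq u := by ring
    rw [h2]
    positivity
  have hsum : Summable (fun n : ℤ => cexp (2 * π * Complex.I * (n : ℂ) ^ 2 * w)) := by
    have h2w : 0 < (2 * w).im := by
      simp only [mul_im, ofReal_re, ofReal_im]
      simpa using him
    refine ((summable_jacobiTheta₂_term_iff 0 (2 * w)).mpr h2w).congr fun n => ?_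
    rw [jacobiTheta₂_term]
    ring_nf
  set e : Fin p × ℤ ≃ ℤ := (Equiv.prodComm (Fin p) ℤ).trans (Int.divModEquiv p).symm with he_def
  have he : ∀ x : Fin p × ℤ, (e x : ℤ) = x.2 * p + (x.1 : ℤ) := fun x => rfl
  have hsum2 : Summable (fun x : Fin p × ℤ =>
      cexp (2 * π * Complex.I * (((x.2 * p + (x.1 : ℤ) : ℤ)) : ℂ) ^ 2 * w)) := by
    refine (e.summable_iff.mpr hsum).congr fun x => ?_
    simp only [Function.comp_apply, he]
  have step1 : phi w = ∑ r : Fin p, ∑' m : ℤ,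
      cexp (2 * π * Complex.I * (((m * p + (r : ℤ) : ℤ)) : ℂ) ^ 2 * w) := by
    rw [phi, ← Equiv.tsum_eq e (fun n : ℤ => cexp (2 * π * Complex.I * (n : ℂ) ^ 2 * w))]
    rw [show (fun x : Fin p × ℤ => cexp (2 * π * Complex.I * ((e x : ℤ) : ℂ) ^ 2 * w))
        = fun x : Fin p × ℤ => cexp (2 * π * Complex.I * (((x.2 * p + (x.1 : ℤ) : ℤ)) : ℂ) ^ 2 * w) from
      funext fun x => by rw [he]]
    rw [Summable.tsum_prod' hsum2 fun b => hsum2.prod_factor b, tsum_fintype]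
  have step3 : ∀ r : Fin p, ∑' m : ℤ, cexp (2 * π * Complex.I * (((m * p + (r : ℤ) : ℤ)) : ℂ) ^ 2 * w)
      = cexp (2 * π * Complex.I * (r : ℂ) ^ 2 / p) * (cexp (-(2 * π * Complex.I * (r : ℂ) ^ 2 / ((p : ℂ) * u))) *
          jacobiTheta₂ (-2 * (r : ℂ) / u) (-2 * (p : ℂ) / u)) := by
    intro r
    rw [jacobiTheta₂, ← tsum_mul_left, ← tsum_mul_left]
    refine tsum_congr fun m => ?_
    rw [jacobiTheta₂_term, ← Complex.exp_add, ← Complex.exp_add]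
    have hexp : 2 * π * Complex.I * (((m * p + (r : ℤ) : ℤ)) : ℂ) ^ 2 * w
        = (2 * π * Complex.I * (r : ℂ) ^ 2 / p + (-(2 * π * Complex.I * (r : ℂ) ^ 2 / ((p : ℂ) * u)) +
            (2 * π * Complex.I * m * (-2 * (r : ℂ) / u) + π * Complex.I * (m : ℂ) ^ 2 * (-2 * (p : ℂ) / u))))
          + (((p : ℤ) * m ^ 2 + 2 * m * (r : ℤ) : ℤ) : ℂ) * (2 * π * Complex.I) := by
      rw [hw_def]
      push_cast
      field_simp
      ring
    rw [hexp, Complex.exp_add, Complex.exp_int_mul_two_pi_mul_I, mul_one]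
  have step4 : ∀ r : Fin p, jacobiTheta₂ (-2 * (r : ℂ) / u) (-2 * (p : ℂ) / u)
      = 1 / (2 * Complex.I * p / u) ^ (1 / 2 : ℂ) * cexp (2 * π * Complex.I * (r : ℂ) ^ 2 / ((p : ℂ) * u)) *
          jacobiTheta₂ ((r : ℂ) / p) (u / (2 * p)) := by
    intro r
    rw [jacobiTheta₂_functional_equation]
    have e1 : -Complex.I * (-2 * (p : ℂ) / u) = 2 * Complex.I * p / u := by ring
    have e2 : (-2 * (r : ℂ) / u) / (-2 * (p : ℂ) / u) = (r : ℂ) / p := by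
      field_simp
    have e3 : -1 / (-2 * (p : ℂ) / u) = u / (2 * (p : ℂ)) := by field_simp
    have e4 : -↑π * Complex.I * (-2 * (r : ℂ) / u) ^ 2 / (-2 * (p : ℂ) / u)
        = 2 * π * Complex.I * (r : ℂ) ^ 2 / ((p : ℂ) * u) := by
      field_simp
    rw [e1, e2, e3, e4]
  rw [step1]
  rw [Finset.mul_sum]
  refine Finset.sum_congr rfl fun r _ => ?_
  rw [step3 r, step4 r]
  have : cexp (-(2 * π * Complex.I * (r : ℂ) ^ 2 / ((p : ℂ) * u))) *
        (1 / (2 * Complex.I * p / u) ^ (1 / 2 : ℂ) * cexp (2 * π * Complex.I * (r : ℂ) ^ 2 / ((p : ℂ) * u)) *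
          jacobiTheta₂ ((r : ℂ) / p) (u / (2 * p)))
      = 1 / (2 * Complex.I * p / u) ^ (1 / 2 : ℂ) *
          ((cexp (-(2 * π * Complex.I * (r : ℂ) ^ 2 / ((p : ℂ) * u))) *
            cexp (2 * π * Complex.I * (r : ℂ) ^ 2 / ((p : ℂ) * u))) *
            jacobiTheta₂ ((r : ℂ) / p) (u / (2 * p))) := by ring
  rw [this, ← Complex.exp_add, neg_add_cancel, Complex.exp_zero, one_mul]
  ring
lemma chi4_eq (p : ℕ) (hodd : Odd p) : (chi4 p : ℂ) = (ZMod.χ₄ (p : ZMod 4) : ℂ) := by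
  have h2 : p % 2 = 1 := Nat.odd_iff.mp hodd
  rw [ZMod.χ₄_nat_eq_if_mod_four, chi4]
  have hcast : (p : ℤ) % 4 = ((p % 4 : ℕ) : ℤ) := by push_cast; omega
  rcases (by omega : p % 4 = 1 ∨ p % 4 = 3) with h | h
  · rw [hcast, h]; norm_num [h2, h]
  · rw [hcast, h]; norm_num [h2, h]

lemma gauss_sq (p : ℕ) (hp : p.Prime) (hodd : Odd p) :
    (∑ r : Fin p, cexp (2 * π * Complex.I * (r : ℂ) ^ 2 / p)) ^ 2 = (chi4 p : ℂ) * p := by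
  haveI : Fact p.Prime := ⟨hp⟩
  haveI : NeZero p := ⟨hp.ne_zero⟩
  have hp2 : p ≠ 2 := by rintro rfl; exact (Nat.not_odd_iff_even.mpr even_two) hodd
  have hchar : ringChar (ZMod p) ≠ 2 := by
    rw [ZMod.ringChar_zmod_n]; exact hp2
  set ψ : AddChar (ZMod p) ℂ := ZMod.stdAddChar with hψ
  set χ : MulChar (ZMod p) ℂ :=
    (quadraticChar (ZMod p)).ringHomComp (Int.castRingHom ℂ) with hχ
  -- step a
  have stepa : (∑ r : Fin p, cexp (2 * π * Complex.I * (r : ℂ) ^ 2 / p))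
      = ∑ x : ZMod p, ψ (x ^ 2) := by
    have hbij : Function.Bijective (fun r : Fin p => ((r : ℕ) : ZMod p)) := by
      refine (Fintype.bijective_iff_injective_and_card _).mpr ⟨fun r s hrs => ?_, by simp [ZMod.card]⟩
      have hv : ((r : ℕ) : ZMod p).val = ((s : ℕ) : ZMod p).val := by
        simp only at hrs; rw [hrs]
      rwa [ZMod.val_natCast_of_lt r.2, ZMod.val_natCast_of_lt s.2, Fin.val_eq_val] at hv
    refine Fintype.sum_bijective _ hbij _ _ fun r => ?_
    · have : ((((r : ℕ) : ZMod p)) ^ 2 : ZMod p) = (((r : ℕ) ^ 2 : ℤ) : ZMod p) := by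
        push_cast; ring
      rw [this, hψ, ZMod.stdAddChar_coe]
      push_cast
      ring_nf
  -- step b
  have stepb : ∑ x : ZMod p, ψ (x ^ 2) = gaussSum χ ψ := by
    classical
    have hfib : ∑ x : ZMod p, ψ (x ^ 2)
        = ∑ a : ZMod p, ∑ x ∈ Finset.univ.filter (fun x : ZMod p => x ^ 2 = a), ψ (x ^ 2) :=
      (Finset.sum_fiberwise _ _ _).symm
    rw [hfib]
    have hcard : ∀ a : ZMod p,
        ((Finset.univ.filter (fun x : ZMod p => x ^ 2 = a)).card : ℂ)
          = (quadraticChar (ZMod p) a : ℂ) + 1 := by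
      intro a
      have := quadraticChar_card_sqrts hchar a
      rw [Set.toFinset_setOf] at this
      exact_mod_cast congrArg (Int.cast : ℤ → ℂ) this
    have : ∀ a : ZMod p, ∑ x ∈ Finset.univ.filter (fun x : ZMod p => x ^ 2 = a), ψ (x ^ 2)
        = ((quadraticChar (ZMod p) a : ℂ) + 1) * ψ a := by
      intro a
      rw [Finset.sum_congr rfl (fun x hx => by rw [(Finset.mem_filter.mp hx).2]),
        Finset.sum_const, nsmul_eq_mul, hcard]
    rw [Finset.sum_congr rfl fun a _ => this a]
    have hψ0 : ∑ a : ZMod p, ψ a = 0 := by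
      rw [AddChar.sum_eq_zero_iff_ne_zero]
      intro h0
      have h1 : (ZMod.stdAddChar : AddChar (ZMod p) ℂ) (1 : ZMod p)
          = (ZMod.stdAddChar : AddChar (ZMod p) ℂ) (0 : ZMod p) := by
        rw [AddChar.map_zero_eq_one]
        have := congrArg (fun χ' : AddChar (ZMod p) ℂ => χ' (1 : ZMod p)) h0
        simpa [hψ] using this
      exact one_ne_zero (ZMod.injective_stdAddChar h1)
    simp_rw [add_mul, one_mul, Finset.sum_add_distrib, hψ0, add_zero]
    rw [gaussSum]
    refine Finset.sum_congr rfl fun a _ => ?_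
    rw [hχ, MulChar.ringHomComp_apply]
    simp
  -- step c
  have hχ1 : χ ≠ 1 :=
    (MulChar.ringHomComp_ne_one_iff Int.cast_injective).mpr (quadraticChar_ne_one hchar)
  have hχq : χ.IsQuadratic := (quadraticChar_isQuadratic (ZMod p)).comp _
  have hsq := gaussSum_sq hχ1 hχq (ZMod.isPrimitive_stdAddChar p)
  rw [stepa, stepb, hsq]
  have hχm1 : χ (-1) = ((quadraticChar (ZMod p) (-1) : ℤ) : ℂ) := by
    rw [hχ, MulChar.ringHomComp_apply]; simp
  rw [hχm1, quadraticChar_neg_one hchar, ZMod.card, chi4_eq p hodd]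

theorem theta_constant_term_cusp_one_over_p (p : ℕ) (hp : p.Prime) (hodd : Odd p)
    (k : ℕ) (hk : 1 ≤ k) (j : ℕ) (hj : j ≤ 2 * k) :
    Tendsto (fun τ : ℍ =>
        phi ((τ : ℂ) / ((p : ℂ) * τ + 1)) ^ (4 * k - 2 * j) *
          phi ((p : ℂ) * τ / ((p : ℂ) * τ + 1)) ^ (2 * j) / ((p : ℂ) * τ + 1) ^ (2 * k))
      atImInfty (nhds ((-1 : ℂ) ^ k * (chi4 p : ℂ) ^ j / 2 ^ (2 * k))) := by
  haveI : NeZero p := ⟨hp.ne_zero⟩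
  have hp0 : (p : ℂ) ≠ 0 := Nat.cast_ne_zero.mpr hp.ne_zero
  have hpR : (0 : ℝ) < (p : ℝ) := by exact_mod_cast hp.pos
  set n := 2 * k - j with hn_def
  have hn : 2 * k = n + j := by omega
  have he1 : 4 * k - 2 * j = 2 * n := by omega
  set g : ℂ := ∑ r : Fin p, cexp (2 * π * Complex.I * (r : ℂ) ^ 2 / p) with hg
  set G : ℍ → ℂ := fun τ => ∑ r : Fin p, cexp (2 * π * Complex.I * (r : ℂ) ^ 2 / p) *
      jacobiTheta₂ ((r : ℂ) / p) (((p : ℂ) * τ + 1) / (2 * p)) with hG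
  set H : ℍ → ℂ := fun τ => jacobiTheta₂ 0 (((p : ℂ) * τ + 1) / 2) with hH
  have hIp : (2 * Complex.I * (p : ℂ)) ≠ 0 := by
    simp [I_ne_zero, hp0]
  have hI2 : (2 * Complex.I : ℂ) ≠ 0 := by simp [I_ne_zero]
  -- step E : pointwise formula
  have stepE : ∀ τ : ℍ,
      phi ((τ : ℂ) / ((p : ℂ) * τ + 1)) ^ (4 * k - 2 * j) *
          phi ((p : ℂ) * τ / ((p : ℂ) * τ + 1)) ^ (2 * j) / ((p : ℂ) * τ + 1) ^ (2 * k)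
        = (G τ) ^ (2 * n) * (H τ) ^ (2 * j) / ((2 * Complex.I * p) ^ n * (2 * Complex.I) ^ j) := by
    intro τ
    set u : ℂ := (p : ℂ) * τ + 1 with hu_def
    have him : 0 < u.im := by
      rw [hu_def]
      simp only [add_im, one_im, mul_im, natCast_re, natCast_im, zero_mul, add_zero]
      have := τ.2
      positivity
    have hu0 : u ≠ 0 := fun h => by simp [h] at him
    have hw1 : (τ : ℂ) / ((p : ℂ) * τ + 1) = (u - 1) / ((p : ℂ) * u) := by
      rw [hu_def]
      field_simp
      ring
    have hw2 : (p : ℂ) * τ / ((p : ℂ) * τ + 1) = 1 - 1 / u := by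
      rw [hu_def]
      rw [eq_sub_iff_add_eq, ← add_div, div_self hu0]
    rw [hw1, hw2, phi_w1 p him, phi_w2 him]
    have hc1 : (2 * Complex.I * (p : ℂ) / u) ≠ 0 := div_ne_zero hIp hu0
    have hc2 : (2 * Complex.I / u : ℂ) ≠ 0 := div_ne_zero hI2 hu0
    have hA2 : (1 / (2 * Complex.I * (p : ℂ) / u) ^ (1 / 2 : ℂ)) ^ 2 = u / (2 * Complex.I * p) := by
      rw [div_pow, one_pow, sq, ← Complex.cpow_add _ _ hc1]
      norm_num
    have hB2 : (1 / (2 * Complex.I / u : ℂ) ^ (1 / 2 : ℂ)) ^ 2 = u / (2 * Complex.I) := by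
      rw [div_pow, one_pow, sq, ← Complex.cpow_add _ _ hc2]
      norm_num
    rw [he1, mul_pow, mul_pow, pow_mul _ 2 n, pow_mul _ 2 j, hA2, hB2]
    have hGτ : (∑ r : Fin p, cexp (2 * π * Complex.I * (r : ℂ) ^ 2 / p) *
        jacobiTheta₂ ((r : ℂ) / p) (u / (2 * p))) = G τ := by rw [hG, hu_def]
    have hHτ : jacobiTheta₂ 0 (u / 2) = H τ := by rw [hH, hu_def]
    rw [hGτ, hHτ]
    have hu2k : u ^ (2 * k) = u ^ n * u ^ j := by rw [← pow_add, ← hn]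
    rw [div_pow, div_pow, hu2k]
    field_simp
  -- limits
  have htop : Tendsto (fun τ : ℍ => UpperHalfPlane.im τ) atImInfty atTop := tendsto_comap
  have hv1 : Tendsto (fun τ : ℍ => ((((p : ℂ) * τ + 1) / (2 * p)).im)) atImInfty atTop := by
    have heq : ∀ τ : ℍ, (((p : ℂ) * τ + 1) / (2 * (p : ℂ))).im = UpperHalfPlane.im τ / 2 := by
      intro τ
      rw [show (2 * (p : ℂ)) = ((2 * (p : ℝ) : ℝ) : ℂ) by push_cast; ring,
        Complex.div_ofReal_im]
      have him : (((p : ℂ) * τ + 1)).im = (p : ℝ) * UpperHalfPlane.im τ := by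
        rw [Complex.add_im, Complex.one_im, add_zero, Complex.mul_im, Complex.natCast_re,
          Complex.natCast_im, zero_mul, add_zero, UpperHalfPlane.coe_im]
      rw [him]
      field_simp
    simp_rw [heq]
    exact htop.atTop_div_const (by norm_num)
  have hv2 : Tendsto (fun τ : ℍ => ((((p : ℂ) * τ + 1) / 2).im)) atImInfty atTop := by
    have heq : ∀ τ : ℍ, (((p : ℂ) * τ + 1) / 2).im = (p : ℝ) * UpperHalfPlane.im τ / 2 := by
      intro τ
      rw [show ((2 : ℂ)) = ((2 : ℝ) : ℂ) by norm_num, Complex.div_ofReal_im]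
      rw [Complex.add_im, Complex.one_im, add_zero, Complex.mul_im, Complex.natCast_re,
        Complex.natCast_im, zero_mul, add_zero, UpperHalfPlane.coe_im]
    simp_rw [heq]
    exact (htop.const_mul_atTop hpR).atTop_div_const (by norm_num)
  have hGlim : Tendsto G atImInfty (𝓝 g) := by
    have hsum : Tendsto (fun τ : ℍ => ∑ r : Fin p, cexp (2 * π * Complex.I * (r : ℂ) ^ 2 / p) *
        jacobiTheta₂ ((r : ℂ) / p) (((p : ℂ) * τ + 1) / (2 * p))) atImInfty
        (𝓝 (∑ r : Fin p, cexp (2 * π * Complex.I * (r : ℂ) ^ 2 / p) * 1)) := by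
      refine tendsto_finset_sum _ fun r _ => tendsto_const_nhds.mul ?_
      have hx : ((r : ℂ) / p) = (((r : ℝ) / p : ℝ) : ℂ) := by push_cast; ring
      rw [hx]
      exact phiaux_tendsto_theta2_one _ hv1
    simp only [mul_one] at hsum
    exact hsum
  have hHlim : Tendsto H atImInfty (𝓝 1) := by
    have := phiaux_tendsto_theta2_one (0 : ℝ) hv2
    simpa [hH] using this
  have hmain : Tendsto (fun τ : ℍ => (G τ) ^ (2 * n) * (H τ) ^ (2 * j) /
      ((2 * Complex.I * (p : ℂ)) ^ n * (2 * Complex.I) ^ j)) atImInfty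
      (𝓝 (g ^ (2 * n) * 1 ^ (2 * j) / ((2 * Complex.I * (p : ℂ)) ^ n * (2 * Complex.I) ^ j))) :=
    ((hGlim.pow (2 * n)).mul (hHlim.pow (2 * j))).div_const _
  have hval : g ^ (2 * n) * 1 ^ (2 * j) / ((2 * Complex.I * (p : ℂ)) ^ n * (2 * Complex.I) ^ j)
      = (-1 : ℂ) ^ k * (chi4 p : ℂ) ^ j / 2 ^ (2 * k) := by
    have hg2 : g ^ (2 * n) = (chi4 p : ℂ) ^ n * (p : ℂ) ^ n := by
      rw [pow_mul, gauss_sq p hp hodd, mul_pow]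
    have hchin : ((chi4 p : ℂ)) ^ n = ((chi4 p : ℂ)) ^ j := by
      have hcases : (chi4 p : ℂ) = 1 ∨ (chi4 p : ℂ) = -1 := by
        have h2 : p % 2 = 1 := Nat.odd_iff.mp hodd
        have hcast : (p : ℤ) % 4 = ((p % 4 : ℕ) : ℤ) := by push_cast; omega
        rcases (by omega : p % 4 = 1 ∨ p % 4 = 3) with h | h
        · left; rw [chi4, hcast, h]; norm_num
        · right; rw [chi4, hcast, h]; norm_num
      rcases hcases with h | h
      · rw [h, one_pow, one_pow]
      · rw [h]
        have h1 : ((-1 : ℂ)) ^ n * ((-1 : ℂ)) ^ j = 1 := by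
          rw [← pow_add, ← hn, pow_mul]
          norm_num
        have h2 : ((-1 : ℂ)) ^ j * ((-1 : ℂ)) ^ j = 1 := by
          rw [← pow_add, ← two_mul, pow_mul]
          norm_num
        calc ((-1 : ℂ)) ^ n = ((-1 : ℂ)) ^ n * (((-1 : ℂ)) ^ j * ((-1 : ℂ)) ^ j) := by
              rw [h2, mul_one]
          _ = (((-1 : ℂ)) ^ n * ((-1 : ℂ)) ^ j) * ((-1 : ℂ)) ^ j := by ring
          _ = ((-1 : ℂ)) ^ j := by rw [h1, one_mul]
    have hden : ((2 * Complex.I * (p : ℂ)) ^ n * (2 * Complex.I) ^ j) = (-4 : ℂ) ^ k * (p : ℂ) ^ n := by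
      have : ((2 * Complex.I * (p : ℂ)) ^ n * (2 * Complex.I) ^ j) = (2 * Complex.I : ℂ) ^ (n + j) * (p : ℂ) ^ n := by
        rw [pow_add, mul_pow]
        ring
      rw [this, ← hn, pow_mul,
        show ((2 * Complex.I : ℂ)) ^ 2 = -4 by rw [mul_pow, Complex.I_sq]; norm_num]
    rw [hg2, hchin, hden, one_pow, mul_one]
    have hpn : (p : ℂ) ^ n ≠ 0 := pow_ne_zero _ hp0
    have h4 : ((-4 : ℂ)) ^ k ≠ 0 := pow_ne_zero _ (by norm_num)
    have h2k : ((2 : ℂ)) ^ (2 * k) ≠ 0 := pow_ne_zero _ two_ne_zero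
    rw [div_eq_div_iff (mul_ne_zero h4 hpn) h2k,
      show ((-4 : ℂ)) ^ k = (-1 : ℂ) ^ k * 2 ^ (2 * k) by
        rw [show ((-4 : ℂ)) = (-1) * 2 ^ 2 by norm_num, mul_pow, ← pow_mul]]
    have hm1 : ((-1 : ℂ)) ^ k * ((-1 : ℂ)) ^ k = 1 := by
      rw [← pow_add, ← two_mul, pow_mul]; norm_num
    calc (chi4 p : ℂ) ^ j * (p : ℂ) ^ n * 2 ^ (2 * k)
        = ((-1 : ℂ) ^ k * (-1 : ℂ) ^ k) * ((chi4 p : ℂ) ^ j * (p : ℂ) ^ n * 2 ^ (2 * k)) := by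
          rw [hm1, one_mul]
      _ = (-1 : ℂ) ^ k * (chi4 p : ℂ) ^ j * ((-1 : ℂ) ^ k * 2 ^ (2 * k) * (p : ℂ) ^ n) := by
          ring
  rw [← hval]
  exact hmain.congr fun τ => (stepE τ).symm
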